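/- arXiv:2202.10759 — 2 statements merged into one kernel-verified Lean document; each statement's English description precedes it below -/
import Mathlib

section
/- Let f : ℕ≥1 → ℕ≥1 assign to each n its largest square-free divisor d of n satisfying gcd(d, n/d) = 1 (i.e., the product of primes dividing n exactly once). Then for all X ≥ 2, ∑_{n ≤ X} f(n)^{-1/4} ≪ X^{3/4}, with an absolute implied constant. -/
open Finset

/-- `squarefreeUnitaryPart n` is the largest square-free divisor `d` of `n` with
`gcd(d, n/d) = 1`, i.e. the product of the primes dividing `n` exactly once. -/
noncomputable def squarefreeUnitaryPart (n : ℕ) : ℕ :=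
  ∏ p ∈ n.primeFactors.filter (fun p => n.factorization p = 1), p


lemma myIccIco (M : ℕ) : Finset.Icc 1 M = Finset.Ico 1 (M+1) := by
  ext x; simp [Nat.lt_succ_iff]

lemma bern34 (t : ℝ) (h0 : 0 ≤ t) (h1 : t ≤ 1) : (1 - t) ^ ((3:ℝ)/4) ≤ 1 - 3/4 * t := by
  have hA : (0:ℝ) ≤ (1-t) ^ ((3:ℝ)/4) := Real.rpow_nonneg (by linarith) _
  have hB : (0:ℝ) ≤ 1 - 3/4*t := by linarith
  have h4 : ((1-t) ^ ((3:ℝ)/4)) ^ (4:ℕ) = (1-t)^(3:ℕ) := by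
    rw [← Real.rpow_natCast ((1-t) ^ ((3:ℝ)/4)) 4, ← Real.rpow_mul (by linarith),
      show ((3:ℝ)/4 * (4:ℕ)) = ((3:ℕ):ℝ) by norm_num, Real.rpow_natCast]
  refine le_of_pow_le_pow_left₀ (n := 4) (by norm_num) hB ?_
  rw [h4]
  nlinarith [sq_nonneg t, sq_nonneg (1-t), sq_nonneg (t*(1-t)), sq_nonneg (t*t)]

lemma bern12 (t : ℝ) (h0 : 0 ≤ t) (h1 : t ≤ 1) : (1 - t) ^ ((1:ℝ)/2) ≤ 1 - 1/2 * t := by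
  have hB : (0:ℝ) ≤ 1 - 1/2*t := by linarith
  have h4 : ((1-t) ^ ((1:ℝ)/2)) ^ (2:ℕ) = (1-t)^(1:ℕ) := by
    rw [← Real.rpow_natCast ((1-t) ^ ((1:ℝ)/2)) 2, ← Real.rpow_mul (by linarith),
      show ((1:ℝ)/2 * (2:ℕ)) = ((1:ℕ):ℝ) by norm_num, Real.rpow_natCast]
  refine le_of_pow_le_pow_left₀ (n := 2) (by norm_num) hB ?_
  rw [h4]
  nlinarith [sq_nonneg t]

lemma termA (s : ℕ) (hs : 1 ≤ s) :
    (s:ℝ) ^ (-(1/4) : ℝ) ≤ 4/3 * ((s:ℝ)^((3:ℝ)/4) - ((s:ℝ)-1)^((3:ℝ)/4)) := by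
  have hx : (1:ℝ) ≤ (s:ℝ) := by exact_mod_cast hs
  set x := (s:ℝ) with hxdef
  have hx0 : (0:ℝ) < x := by linarith
  have key : (1 - 1/x)^((3:ℝ)/4) ≤ 1 - 3/4*(1/x) :=
    bern34 _ (by positivity) (by rw [div_le_one hx0]; linarith)
  have hxm : x - 1 = x * (1 - 1/x) := by field_simp
  have h2 : (x-1)^((3:ℝ)/4) = x^((3:ℝ)/4) * (1 - 1/x)^((3:ℝ)/4) := by
    rw [hxm, Real.mul_rpow hx0.le (by rw [sub_nonneg, div_le_one hx0]; linarith)]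
  have h3 : x ^ ((3:ℝ)/4) * (1/x) = x ^ (-(1/4) : ℝ) := by
    rw [one_div, ← Real.rpow_neg_one x, ← Real.rpow_add hx0]; norm_num
  have hxp : (0:ℝ) ≤ x^((3:ℝ)/4) := Real.rpow_nonneg hx0.le _
  have h4 : x^((3:ℝ)/4) * (1 - 1/x)^((3:ℝ)/4) ≤ x^((3:ℝ)/4) * (1 - 3/4*(1/x)) :=
    mul_le_mul_of_nonneg_left key hxp
  have h5 : x^((3:ℝ)/4) * (1 - 3/4*(1/x)) = x^((3:ℝ)/4) - 3/4 * (x^((3:ℝ)/4) * (1/x)) := by ring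
  rw [h2] at *
  rw [h5, h3] at h4
  linarith

lemma termB (a : ℕ) (ha : 2 ≤ a) :
    (a:ℝ) ^ (-(3/2) : ℝ) ≤ 2 * (((a:ℝ)-1)^(-(1/2) : ℝ) - (a:ℝ)^(-(1/2) : ℝ)) := by
  have hx : (2:ℝ) ≤ (a:ℝ) := by exact_mod_cast ha
  set x := (a:ℝ) with hxdef
  have hx0 : (0:ℝ) < x := by linarith
  have hx1 : (0:ℝ) < x - 1 := by linarith
  set u := x ^ ((1:ℝ)/2) with hu
  set v := (x-1) ^ ((1:ℝ)/2) with hv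
  have hu0 : 0 < u := Real.rpow_pos_of_pos hx0 _
  have hv0 : 0 < v := Real.rpow_pos_of_pos hx1 _
  have hu2 : u^2 = x := by
    rw [hu, ← Real.rpow_natCast (x ^ ((1:ℝ)/2)) 2, ← Real.rpow_mul hx0.le]; norm_num
  have hv2 : v^2 = x - 1 := by
    rw [hv, ← Real.rpow_natCast ((x-1) ^ ((1:ℝ)/2)) 2, ← Real.rpow_mul hx1.le]; norm_num
  have hvu : v ≤ u := by
    rw [hu, hv]
    exact Real.rpow_le_rpow hx1.le (by linarith) (by norm_num)
  -- v ≤ u - 1/(2u)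
  have hxm : x - 1 = x * (1 - 1/x) := by field_simp
  have hvb : v ≤ u - 1/(2*u) := by
    have h1 : v = u * (1 - 1/x)^((1:ℝ)/2) := by
      rw [hv, hu, hxm, Real.mul_rpow hx0.le (by rw [sub_nonneg, div_le_one hx0]; linarith)]
    have h2 : (1 - 1/x)^((1:ℝ)/2) ≤ 1 - 1/2*(1/x) :=
      bern12 _ (by positivity) (by rw [div_le_one hx0]; linarith)
    have h3 : u * (1 - 1/2*(1/x)) = u - 1/(2*u) := by
      have : u * (1/x) = 1/u := by
        rw [← hu2]; field_simp
      field_simp at this ⊢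
      nlinarith [this]
    calc v = u * (1 - 1/x)^((1:ℝ)/2) := h1
    _ ≤ u * (1 - 1/2*(1/x)) := mul_le_mul_of_nonneg_left h2 hu0.le
    _ = u - 1/(2*u) := h3
  -- rewrite goal
  have e1 : x ^ (-(3/2) : ℝ) = (x * u)⁻¹ := by
    rw [Real.rpow_neg hx0.le]
    congr 1
    rw [hu, show ((3:ℝ)/2) = 1 + 1/2 by norm_num, Real.rpow_add hx0, Real.rpow_one]
  have e2 : x ^ (-(1/2) : ℝ) = u⁻¹ := by rw [Real.rpow_neg hx0.le, hu]
  have e3 : (x-1) ^ (-(1/2) : ℝ) = v⁻¹ := by rw [Real.rpow_neg hx1.le, hv]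
  rw [e1, e2, e3]
  have h1le : 1 ≤ 2*u*(u - v) := by
    have := mul_le_mul_of_nonneg_left hvb (by positivity : (0:ℝ) ≤ 2*u)
    have h2u : 2*u*(u - 1/(2*u)) = 2*u*u - 1 := by field_simp
    nlinarith
  rw [inv_eq_one_div, inv_eq_one_div, inv_eq_one_div, div_sub_div _ _ hv0.ne' hu0.ne',
    mul_one, one_mul, ← mul_div_assoc, div_le_div_iff₀ (by positivity) (by positivity)]
  have hx2 : x = u^2 := hu2.symm
  nlinarith [mul_le_mul_of_nonneg_left h1le hx0.le, mul_nonneg hu0.le (sub_nonneg.mpr hvu), hu0, hv0]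

lemma termC (b : ℕ) (hb : 2 ≤ b) :
    (b:ℝ) ^ (-(9/4) : ℝ) ≤ 1/((b:ℝ)-1) - 1/(b:ℝ) := by
  have hx : (2:ℝ) ≤ (b:ℝ) := by exact_mod_cast hb
  have h1 : (b:ℝ) ^ (-(9/4) : ℝ) ≤ (b:ℝ) ^ (-(2:ℝ)) :=
    Real.rpow_le_rpow_of_exponent_le (by linarith) (by norm_num)
  have h2 : (b:ℝ) ^ (-(2:ℝ)) = ((b:ℝ)^(2:ℕ))⁻¹ := by
    rw [Real.rpow_neg (by linarith), ← Real.rpow_natCast (b:ℝ) 2]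
    norm_num
  rw [h2] at h1
  refine h1.trans ?_
  rw [div_sub_div _ _ (by linarith : ((b:ℝ)-1) ≠ 0) (by linarith : ((b:ℝ)) ≠ 0)]
  rw [inv_eq_one_div, div_le_div_iff₀ (by positivity) (by nlinarith)]
  nlinarith

lemma tele_bound (g F : ℕ → ℝ) (M : ℕ) (hg0 : ∀ m, 0 ≤ g m)
    (h : ∀ a, 2 ≤ a → F a ≤ g (a-1) - g a) :
    ∑ a ∈ Icc 2 M, F a ≤ g 1 := by
  rcases le_or_gt M 1 with hM | hM
  · rw [Finset.Icc_eq_empty (by omega)]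
    simpa using hg0 1
  · calc ∑ a ∈ Icc 2 M, F a ≤ ∑ a ∈ Icc 2 M, (g (a-1) - g a) :=
        Finset.sum_le_sum (fun a ha => h a (mem_Icc.mp ha).1)
    _ = g 1 - g M := by
        have hIcc : Finset.Icc 2 M = Finset.Ico 2 (M+1) := by ext x; simp [Nat.lt_succ_iff]
        rw [hIcc, Finset.sum_Ico_eq_sum_range]
        have hc : ∀ i ∈ Finset.range (M+1-2),
            g (2+i-1) - g (2+i) = (fun j => g (j+1)) i - (fun j => g (j+1)) (i+1) := by
          intro i _
          congr 2 <;> omega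
        rw [Finset.sum_congr rfl hc, Finset.sum_range_sub' (fun j => g (j+1)) (M+1-2)]
        show g (0+1) - g (M+1-2+1) = g 1 - g M
        have h1 : M+1-2+1 = M := by omega
        rw [h1]
    _ ≤ g 1 := by linarith [hg0 M]

lemma sumA (M : ℕ) : ∑ s ∈ Icc 1 M, (s:ℝ) ^ (-(1/4) : ℝ) ≤ 4/3 * (M:ℝ)^((3:ℝ)/4) := by
  set f : ℕ → ℝ := fun s => (s:ℝ)^((3:ℝ)/4) with hf
  calc ∑ s ∈ Icc 1 M, (s:ℝ) ^ (-(1/4) : ℝ)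
      ≤ ∑ s ∈ Icc 1 M, (4/3 * (f s - f (s-1))) := by
        refine Finset.sum_le_sum fun s hs => ?_
        have hs1 : 1 ≤ s := (mem_Icc.mp hs).1
        have hcast : ((s:ℝ) - 1) = ((s-1 : ℕ) : ℝ) := by
          have := Nat.cast_sub hs1 (R := ℝ); push_cast at this ⊢; linarith
        have := termA s hs1
        rw [hcast] at this
        exact this
    _ = 4/3 * (f M - f 0) := by
        rw [← Finset.mul_sum]
        congr 1
        rw [myIccIco, Finset.sum_Ico_eq_sum_range]
        have hc : ∀ i ∈ Finset.range (M+1-1),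
            f (1+i) - f (1+i-1) = f (i+1) - f i := by
          intro i _
          congr 2 <;> omega
        rw [Finset.sum_congr rfl hc, Finset.sum_range_sub f (M+1-1)]
        have hM1 : M + 1 - 1 = M := by omega
        rw [hM1]
    _ = 4/3 * (M:ℝ)^((3:ℝ)/4) := by
        rw [hf]
        simp only [Nat.cast_zero]
        rw [Real.zero_rpow (by norm_num)]
        ring

lemma sumB (M : ℕ) : ∑ a ∈ Icc 1 M, (a:ℝ) ^ (-(3/2) : ℝ) ≤ 3 := by
  rcases Nat.eq_zero_or_pos M with hM | hM
  · subst hM; simp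
  have hsplit : Finset.Icc 1 M = insert 1 (Finset.Icc 2 M) := by
    ext x; simp only [mem_Icc, mem_insert]; omega
  rw [hsplit, Finset.sum_insert (by simp)]
  have h1 : ((1:ℕ):ℝ) ^ (-(3/2) : ℝ) = 1 := by norm_num
  have hg : ∀ m : ℕ, 0 ≤ 2 * (m:ℝ)^(-(1/2) : ℝ) := fun m => by positivity
  have h2 : ∑ a ∈ Icc 2 M, (a:ℝ) ^ (-(3/2) : ℝ) ≤ (fun m => 2 * ((m:ℕ):ℝ)^(-(1/2) : ℝ)) 1 := by
    refine tele_bound _ _ M hg (fun a ha => ?_)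
    have hcast : ((a:ℝ) - 1) = ((a-1 : ℕ) : ℝ) := by
      have := Nat.cast_sub (by omega : 1 ≤ a) (R := ℝ); push_cast at this ⊢; linarith
    have := termB a ha
    rw [hcast] at this
    linarith
  simp only [Nat.cast_one, Real.one_rpow, mul_one] at h2
  rw [h1]
  linarith

lemma sumC (M : ℕ) : ∑ b ∈ Icc 1 M, (b:ℝ) ^ (-(9/4) : ℝ) ≤ 2 := by
  rcases Nat.eq_zero_or_pos M with hM | hM
  · subst hM; simp
  have hsplit : Finset.Icc 1 M = insert 1 (Finset.Icc 2 M) := by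
    ext x; simp only [mem_Icc, mem_insert]; omega
  rw [hsplit, Finset.sum_insert (by simp)]
  have h1 : ((1:ℕ):ℝ) ^ (-(9/4) : ℝ) = 1 := by norm_num
  have hg : ∀ m : ℕ, 0 ≤ 1/((m:ℕ):ℝ) := fun m => by positivity
  have h2 : ∑ b ∈ Icc 2 M, (b:ℝ) ^ (-(9/4) : ℝ) ≤ (fun m => 1/((m:ℕ):ℝ)) 1 := by
    refine tele_bound _ _ M hg (fun b hb => ?_)
    have hcast : ((b:ℝ) - 1) = ((b-1 : ℕ) : ℝ) := by
      have := Nat.cast_sub (by omega : 1 ≤ b) (R := ℝ); push_cast at this ⊢; linarith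
    have := termC b hb
    rw [hcast] at this
    linarith
  simp only [Nat.cast_one] at h2
  rw [h1]
  norm_num at h2
  linarith

lemma sup_pos (n : ℕ) : 0 < squarefreeUnitaryPart n := by
  apply Finset.prod_pos
  intro p hp
  exact (Nat.prime_of_mem_primeFactors (Finset.mem_filter.mp hp).1).pos

lemma decomp (n : ℕ) (hn : 0 < n) :
    ∃ a b : ℕ, 0 < a ∧ 0 < b ∧ n = squarefreeUnitaryPart n * a ^ 2 * b ^ 3 := by
  classical
  refine ⟨∏ p ∈ n.primeFactors, p ^ ((n.factorization p - (if n.factorization p = 1 then 1 else 0)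
      - 3 * (if n.factorization p % 2 = 1 ∧ n.factorization p ≠ 1 then 1 else 0)) / 2),
    ∏ p ∈ n.primeFactors, p ^ (if n.factorization p % 2 = 1 ∧ n.factorization p ≠ 1 then 1 else 0), ?_, ?_, ?_⟩
  · exact Finset.prod_pos fun p hp => pow_pos (Nat.prime_of_mem_primeFactors hp).pos _
  · exact Finset.prod_pos fun p hp => pow_pos (Nat.prime_of_mem_primeFactors hp).pos _
  · conv_lhs => rw [← Nat.factorization_prod_pow_eq_self hn.ne']
    rw [Finsupp.prod, Nat.support_factorization, squarefreeUnitaryPart, Finset.prod_filter,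
      ← Finset.prod_pow, ← Finset.prod_pow, ← Finset.prod_mul_distrib, ← Finset.prod_mul_distrib]
    refine Finset.prod_congr rfl fun p hp => ?_
    have hep : n.factorization p ≠ 0 := by
      rw [← Finsupp.mem_support_iff, Nat.support_factorization]
      exact hp
    have h1 : (if n.factorization p = 1 then p else 1) = p ^ (if n.factorization p = 1 then 1 else 0) := by
      split_ifs <;> simp
    rw [h1, ← pow_mul, ← pow_mul, ← pow_add, ← pow_add]
    congr 1
    split_ifs <;> omega

noncomputable def dF (n : ℕ) : (_ : ℕ × ℕ) × ℕ :=
  if h : 0 < n then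
    ⟨((decomp n h).choose, ((decomp n h).choose_spec).choose), squarefreeUnitaryPart n⟩
  else ⟨(1,1), 1⟩

lemma dF_spec (n : ℕ) (h : 0 < n) :
    0 < (dF n).1.1 ∧ 0 < (dF n).1.2 ∧ (dF n).2 = squarefreeUnitaryPart n ∧
      n = (dF n).2 * (dF n).1.1 ^ 2 * (dF n).1.2 ^ 3 := by
  rw [dF, dif_pos h]
  obtain ⟨ha, hb, heq⟩ := ((decomp n h).choose_spec).choose_spec
  exact ⟨ha, hb, rfl, heq⟩

/-- `∑_{n ≤ X} f(n)^{-1/4} ≪ X^{3/4}` with an absolute implied constant. -/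
theorem sum_squarefreeUnitaryPart_rpow_neg_quarter :
    ∃ C : ℝ, 0 < C ∧ ∀ X : ℝ, 2 ≤ X →
      ∑ n ∈ Finset.Icc 1 ⌊X⌋₊, (squarefreeUnitaryPart n : ℝ) ^ (-(1/4 : ℝ))
        ≤ C * X ^ ((3:ℝ)/4) := by
  classical
  refine ⟨8, by norm_num, fun X hX => ?_⟩
  have hX0 : (0:ℝ) < X := by linarith
  set N := ⌊X⌋₊ with hN
  have hXpow : (0:ℝ) ≤ X ^ ((3:ℝ)/4) := Real.rpow_nonneg hX0.le _
  set U : Finset ((_ : ℕ × ℕ) × ℕ) :=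
    (Icc 1 N ×ˢ Icc 1 N).sigma (fun ab => Icc 1 (N / (ab.1 ^ 2 * ab.2 ^ 3))) with hU
  have hinj : ∀ x ∈ Icc 1 N, ∀ y ∈ Icc 1 N, dF x = dF y → x = y := by
    intro x hx y hy hxy
    rw [(dF_spec x (mem_Icc.mp hx).1).2.2.2, (dF_spec y (mem_Icc.mp hy).1).2.2.2, hxy]
  have hsub : (Icc 1 N).image dF ⊆ U := by
    intro t ht
    obtain ⟨n, hn, rfl⟩ := Finset.mem_image.mp ht
    obtain ⟨hn1, hnN⟩ := mem_Icc.mp hn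
    obtain ⟨ha, hb, hs, heq⟩ := dF_spec n hn1
    refine Finset.mem_sigma.mpr ⟨Finset.mem_product.mpr ⟨mem_Icc.mpr ⟨ha, ?_⟩,
      mem_Icc.mpr ⟨hb, ?_⟩⟩, mem_Icc.mpr ⟨?_, ?_⟩⟩
    · have hdvd : (dF n).1.1 ∣ (dF n).2 * (dF n).1.1 ^ 2 * (dF n).1.2 ^ 3 :=
        ⟨(dF n).2 * (dF n).1.1 * (dF n).1.2 ^ 3, by ring⟩
      rw [← heq] at hdvd
      exact le_trans (Nat.le_of_dvd hn1 hdvd) hnN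
    · have hdvd : (dF n).1.2 ∣ (dF n).2 * (dF n).1.1 ^ 2 * (dF n).1.2 ^ 3 :=
        ⟨(dF n).2 * (dF n).1.1 ^ 2 * (dF n).1.2 ^ 2, by ring⟩
      rw [← heq] at hdvd
      exact le_trans (Nat.le_of_dvd hn1 hdvd) hnN
    · exact hs ▸ sup_pos n
    · refine (Nat.le_div_iff_mul_le (mul_pos (pow_pos ha 2) (pow_pos hb 3))).mpr ?_
      calc (dF n).2 * ((dF n).1.1 ^ 2 * (dF n).1.2 ^ 3) = n := by
            conv_rhs => rw [heq]
            ring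
      _ ≤ N := hnN
  have inner : ∀ ab ∈ Icc 1 N ×ˢ Icc 1 N,
      ∑ s ∈ Icc 1 (N / (ab.1 ^ 2 * ab.2 ^ 3)), ((s:ℝ)) ^ (-(1/4 : ℝ))
        ≤ (4/3 * X ^ ((3:ℝ)/4)) * ((ab.1:ℝ) ^ (-(3/2) : ℝ) * (ab.2:ℝ) ^ (-(9/4) : ℝ)) := by
    intro ab hab
    obtain ⟨ha, hb⟩ := Finset.mem_product.mp hab
    have ha1 : 1 ≤ ab.1 := (mem_Icc.mp ha).1
    have hb1 : 1 ≤ ab.2 := (mem_Icc.mp hb).1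
    have ha0 : (0:ℝ) < (ab.1:ℝ) := by exact_mod_cast ha1
    have hb0 : (0:ℝ) < (ab.2:ℝ) := by exact_mod_cast hb1
    have hMle : ((N / (ab.1 ^ 2 * ab.2 ^ 3) : ℕ) : ℝ) ≤ X / ((ab.1:ℝ)^2 * (ab.2:ℝ)^3) := by
      calc ((N / (ab.1 ^ 2 * ab.2 ^ 3) : ℕ) : ℝ)
          ≤ (N:ℝ) / ((ab.1 ^ 2 * ab.2 ^ 3 : ℕ) : ℝ) := Nat.cast_div_le
      _ = (N:ℝ) / ((ab.1:ℝ)^2 * (ab.2:ℝ)^3) := by push_cast; ring_nf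
      _ ≤ X / ((ab.1:ℝ)^2 * (ab.2:ℝ)^3) := by
          gcongr
          exact Nat.floor_le hX0.le
    have hrw : (X / ((ab.1:ℝ)^2 * (ab.2:ℝ)^3)) ^ ((3:ℝ)/4)
        = X ^ ((3:ℝ)/4) * ((ab.1:ℝ) ^ (-(3/2) : ℝ) * (ab.2:ℝ) ^ (-(9/4) : ℝ)) := by
      rw [Real.div_rpow hX0.le (by positivity), Real.mul_rpow (by positivity) (by positivity),
        ← Real.rpow_natCast (ab.1:ℝ) 2, ← Real.rpow_natCast (ab.2:ℝ) 3,
        ← Real.rpow_mul ha0.le, ← Real.rpow_mul hb0.le]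
      rw [show ((2:ℕ):ℝ) * ((3:ℝ)/4) = (3/2 : ℝ) by norm_num,
        show ((3:ℕ):ℝ) * ((3:ℝ)/4) = (9/4 : ℝ) by norm_num,
        Real.rpow_neg ha0.le, Real.rpow_neg hb0.le, div_eq_mul_inv, mul_inv]
    calc ∑ s ∈ Icc 1 (N / (ab.1 ^ 2 * ab.2 ^ 3)), ((s:ℝ)) ^ (-(1/4 : ℝ))
        ≤ 4/3 * ((N / (ab.1 ^ 2 * ab.2 ^ 3) : ℕ) : ℝ) ^ ((3:ℝ)/4) := sumA _
      _ ≤ 4/3 * (X / ((ab.1:ℝ)^2 * (ab.2:ℝ)^3)) ^ ((3:ℝ)/4) := by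
          refine mul_le_mul_of_nonneg_left ?_ (by norm_num)
          exact Real.rpow_le_rpow (Nat.cast_nonneg _) hMle (by norm_num)
      _ = (4/3 * X ^ ((3:ℝ)/4)) * ((ab.1:ℝ) ^ (-(3/2) : ℝ) * (ab.2:ℝ) ^ (-(9/4) : ℝ)) := by
          rw [hrw]; ring
  have hSa := sumB N
  have hSb := sumC N
  have hSa0 : (0:ℝ) ≤ ∑ a ∈ Icc 1 N, (a:ℝ) ^ (-(3/2) : ℝ) :=
    Finset.sum_nonneg fun a _ => Real.rpow_nonneg (Nat.cast_nonneg _) _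
  have hSb0 : (0:ℝ) ≤ ∑ b ∈ Icc 1 N, (b:ℝ) ^ (-(9/4) : ℝ) :=
    Finset.sum_nonneg fun b _ => Real.rpow_nonneg (Nat.cast_nonneg _) _
  calc ∑ n ∈ Finset.Icc 1 N, (squarefreeUnitaryPart n : ℝ) ^ (-(1/4 : ℝ))
      = ∑ n ∈ Finset.Icc 1 N, (((dF n).2 : ℝ)) ^ (-(1/4 : ℝ)) := by
        refine Finset.sum_congr rfl fun n hn => ?_
        rw [(dF_spec n (mem_Icc.mp hn).1).2.2.1]
    _ = ∑ t ∈ (Icc 1 N).image dF, ((t.2 : ℝ)) ^ (-(1/4 : ℝ)) := (Finset.sum_image (f := fun t : (_ : ℕ × ℕ) × ℕ => ((t.2 : ℝ)) ^ (-(1/4 : ℝ))) (g := dF) hinj).symm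
    _ ≤ ∑ t ∈ U, ((t.2 : ℝ)) ^ (-(1/4 : ℝ)) :=
        Finset.sum_le_sum_of_subset_of_nonneg hsub
          (fun t _ _ => Real.rpow_nonneg (Nat.cast_nonneg _) _)
    _ = ∑ ab ∈ Icc 1 N ×ˢ Icc 1 N,
          ∑ s ∈ Icc 1 (N / (ab.1 ^ 2 * ab.2 ^ 3)), ((s:ℝ)) ^ (-(1/4 : ℝ)) := by
        rw [hU, Finset.sum_sigma]
    _ ≤ ∑ ab ∈ Icc 1 N ×ˢ Icc 1 N,
          (4/3 * X ^ ((3:ℝ)/4)) * ((ab.1:ℝ) ^ (-(3/2) : ℝ) * (ab.2:ℝ) ^ (-(9/4) : ℝ)) :=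
        Finset.sum_le_sum inner
    _ = (4/3 * X ^ ((3:ℝ)/4)) * ((∑ a ∈ Icc 1 N, (a:ℝ) ^ (-(3/2) : ℝ)) *
          (∑ b ∈ Icc 1 N, (b:ℝ) ^ (-(9/4) : ℝ))) := by
        rw [← Finset.mul_sum]
        congr 1
        rw [Finset.sum_mul_sum, Finset.sum_product]
    _ ≤ (4/3 * X ^ ((3:ℝ)/4)) * (3 * 2) := by
        refine mul_le_mul_of_nonneg_left ?_ (by positivity)
        exact mul_le_mul hSa hSb hSb0 (by norm_num)
    _ = 8 * X ^ ((3:ℝ)/4) := by ring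
end

section
/- Let f : ℕ≥1 → ℕ≥1 assign to each n its largest square-free divisor d of n satisfying gcd(d, n/d) = 1. Then for all X ≥ 2, ∑_{n ≤ X} f(n)^{-1/2} ≪ X^{1/2} log X, with an absolute implied constant. -/
open Finset

lemma fUP_dvd (n : ℕ) : squarefreeUnitaryPart n ∣ n :=
  dvd_trans (Finset.prod_dvd_prod_of_subset _ _ _ (Finset.filter_subset _ _))
    (Nat.prod_primeFactors_dvd n)

lemma fUP_factorization (n q : ℕ) :
    (squarefreeUnitaryPart n).factorization q
      = if q ∈ n.primeFactors.filter (fun p => n.factorization p = 1) then 1 else 0 := by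
  set S := n.primeFactors.filter (fun p => n.factorization p = 1) with hS
  have hprime : ∀ p ∈ S, Nat.Prime p := fun p hp =>
    Nat.prime_of_mem_primeFactors (Finset.mem_filter.mp hp).1
  have h0 : ∀ p ∈ S, p ≠ 0 := fun p hp => (hprime p hp).ne_zero
  rw [squarefreeUnitaryPart, ← hS, Nat.factorization_prod h0]
  rw [Finsupp.finset_sum_apply]
  rw [Finset.sum_congr rfl (fun p hp => by
    rw [(hprime p hp).factorization, Finsupp.single_apply])]
  simp [Finset.sum_ite_eq]

lemma quot_powerful {n : ℕ} (hn : n ≠ 0) {q : ℕ} (hq : q.Prime)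
    (hdvd : q ∣ n / squarefreeUnitaryPart n) : q ^ 2 ∣ n / squarefreeUnitaryPart n := by
  set d := squarefreeUnitaryPart n with hd
  have hdn : d ∣ n := fUP_dvd n
  set m := n / d with hm
  have hmd : m * d = n := Nat.div_mul_cancel hdn
  have hm0 : m ≠ 0 := by rintro h; rw [h, zero_mul] at hmd; exact hn hmd.symm
  have hfac : m.factorization = n.factorization - d.factorization :=
    Nat.factorization_div hdn
  have hq1 : 1 ≤ m.factorization q := by
    rw [← hq.pow_dvd_iff_le_factorization hm0, pow_one]; exact hdvd
  have hfq : m.factorization q = n.factorization q - d.factorization q := by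
    rw [hfac, Finsupp.tsub_apply]
  rw [hq.pow_dvd_iff_le_factorization hm0]
  rw [hfq, fUP_factorization] at hq1 ⊢
  by_cases hqS : q ∈ n.primeFactors.filter (fun p => n.factorization p = 1)
  · rw [if_pos hqS] at hq1
    have := (Finset.mem_filter.mp hqS).2
    omega
  · rw [if_neg hqS] at hq1 ⊢
    have hqn : q ∣ n := hdvd.trans (Nat.div_dvd_of_dvd hdn) |>.trans dvd_rfl
    have hqmem : q ∈ n.primeFactors := Nat.mem_primeFactors.mpr ⟨hq, hqn, hn⟩
    have hne1 : n.factorization q ≠ 1 := by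
      intro h1; exact hqS (Finset.mem_filter.mpr ⟨hqmem, h1⟩)
    have : 1 ≤ n.factorization q := by
      rwa [← hq.pow_dvd_iff_le_factorization hn, pow_one]
    omega

lemma exists_cube_mul_sq {m : ℕ} (hm : m ≠ 0)
    (h : ∀ q, q.Prime → q ∣ m → q ^ 2 ∣ m) :
    ∃ a c : ℕ, 0 < a ∧ 0 < c ∧ a ^ 3 * c ^ 2 = m := by
  obtain ⟨a, b, hab, ha⟩ := Nat.sq_mul_squarefree m
  have ha0 : a ≠ 0 := ha.ne_zero
  have hb0 : b ≠ 0 := by rintro rfl; simp at hab; exact hm hab.symm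
  have hale : ∀ q, a.factorization q ≤ 1 :=
    (Nat.squarefree_iff_factorization_le_one ha0).mp ha
  have hadvd : a ∣ b := by
    rw [← Nat.factorization_le_iff_dvd ha0 hb0]
    intro q
    by_cases hq1 : a.factorization q = 0
    · simp [hq1]
    · have hq : q.Prime := Nat.prime_of_mem_primeFactors
        (Nat.support_factorization a ▸ Finsupp.mem_support_iff.mpr hq1)
      have hqa : q ∣ a := by
        rw [← pow_one q]; rw [hq.pow_dvd_iff_le_factorization ha0]; omega
      have hqm : q ∣ m := hqa.trans ⟨b ^ 2, by rw [← hab]; ring⟩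
      have h2 : 2 ≤ m.factorization q := by
        rw [← hq.pow_dvd_iff_le_factorization hm]; exact h q hq hqm
      have hmfac : m.factorization q = 2 * b.factorization q + a.factorization q := by
        rw [← hab, Nat.factorization_mul (pow_ne_zero 2 hb0) ha0,
          Nat.factorization_pow]
        simp [mul_comm]
      have := hale q
      omega
  obtain ⟨c, hc⟩ := hadvd
  have hc0 : c ≠ 0 := by rintro rfl; simp at hc; exact hb0 hc
  exact ⟨a, c, Nat.pos_of_ne_zero ha0, Nat.pos_of_ne_zero hc0,
    by rw [← hab, hc]; ring⟩

lemma sum_inv_sqrt_le (K : ℕ) :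
    ∑ k ∈ Icc 1 K, (Real.sqrt k)⁻¹ ≤ 2 * Real.sqrt K := by
  induction K with
  | zero => simp
  | succ K ih =>
    rw [Finset.sum_Icc_succ_top (by omega)]
    push_cast
    set s := Real.sqrt ((K : ℝ) + 1) with hsdef
    set t := Real.sqrt (K : ℝ) with htdef
    have hs2 : s ^ 2 = (K : ℝ) + 1 := Real.sq_sqrt (by positivity)
    have ht2 : t ^ 2 = (K : ℝ) := Real.sq_sqrt (by positivity)
    have hsnn : 0 ≤ s := Real.sqrt_nonneg _
    have hs1 : 1 ≤ s := by nlinarith [Nat.cast_nonneg (α := ℝ) K]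
    have ht0 : 0 ≤ t := Real.sqrt_nonneg _
    have key : s⁻¹ ≤ 2 * s - 2 * t := by
      rw [inv_le_iff_one_le_mul₀ (by linarith)]
      nlinarith [sq_nonneg (s - t)]
    linarith

lemma sum_inv_le_one_add_log (K : ℕ) :
    ∑ c ∈ Icc 1 K, ((c : ℝ))⁻¹ ≤ 1 + Real.log K := by
  induction K with
  | zero => simp
  | succ K ih =>
    rcases Nat.eq_zero_or_pos K with rfl | hK
    · simp
    rw [Finset.sum_Icc_succ_top (by omega)]
    push_cast
    have hK0 : (0 : ℝ) < K := by exact_mod_cast hK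
    have key : ((K : ℝ) + 1)⁻¹ ≤ Real.log ((K : ℝ) + 1) - Real.log K := by
      have h := Real.log_le_sub_one_of_pos (x := (K : ℝ) / ((K : ℝ) + 1))
        (by positivity)
      rw [Real.log_div (by positivity) (by positivity)] at h
      have e : (K : ℝ) / ((K : ℝ) + 1) - 1 = -(((K : ℝ) + 1)⁻¹) := by
        field_simp; ring
      rw [e] at h; linarith
    linarith

lemma sum_inv_mul_sqrt_le (K : ℕ) :
    ∑ a ∈ Icc 1 K, ((a : ℝ) * Real.sqrt a)⁻¹ ≤ 3 := by
  have main : ∀ K : ℕ, 1 ≤ K →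
      ∑ a ∈ Icc 1 K, ((a : ℝ) * Real.sqrt a)⁻¹ ≤ 3 - 2 * (Real.sqrt K)⁻¹ := by
    intro K hK
    induction K with
    | zero => omega
    | succ K ih =>
      rcases Nat.eq_zero_or_pos K with rfl | hKpos
      · norm_num
      rw [Finset.sum_Icc_succ_top (by omega)]
      push_cast
      have hKR : (1 : ℝ) ≤ (K : ℝ) := by exact_mod_cast hKpos
      set s := Real.sqrt ((K : ℝ) + 1) with hsdef
      set t := Real.sqrt (K : ℝ) with htdef
      have hs2 : s ^ 2 = (K : ℝ) + 1 := Real.sq_sqrt (by positivity)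
      have ht2 : t ^ 2 = (K : ℝ) := Real.sq_sqrt (by positivity)
      have htnn : 0 ≤ t := Real.sqrt_nonneg _
      have hsnn : 0 ≤ s := Real.sqrt_nonneg _
      have ht1 : 1 ≤ t := by nlinarith
      have hst : t ≤ s := Real.sqrt_le_sqrt (by linarith)
      have hs0 : (0:ℝ) < s := by linarith
      have ht0 : (0:ℝ) < t := by linarith
      have harg : ((K : ℝ) + 1) * s = s ^ 2 * s := by rw [hs2]
      have key : (((K : ℝ) + 1) * s)⁻¹ ≤ 2 * t⁻¹ - 2 * s⁻¹ := by
        rw [harg]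
        have e : 2 * t⁻¹ - 2 * s⁻¹ = 2 * (s - t) / (t * s) := by
          field_simp
        have hdiff : (s - t) * (s + t) = 1 := by nlinarith
        have h1 : t * s * (s + t) ≤ 2 * (s ^ 2 * s) := by
          nlinarith [mul_nonneg (mul_nonneg hsnn hsnn) (sub_nonneg.mpr hst),
            mul_nonneg (mul_nonneg hsnn htnn) (sub_nonneg.mpr hst)]
        have h2 : 2 * (s - t) / (t * s) * (t * s) = 2 * (s - t) := by
          field_simp
        rw [e]
        rw [inv_eq_one_div, div_le_div_iff₀ (by positivity) (by positivity)]
        have h3 : 2 * (s - t) * (s ^ 2 * s) * (s + t) = 2 * (s ^ 2 * s) := by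
          linear_combination 2 * (s ^ 2 * s) * hdiff
        have h4 : 1 * (t * s) * (s + t) ≤ 2 * (s - t) * (s ^ 2 * s) * (s + t) := by
          rw [h3]; linarith
        have hsum : (0:ℝ) < s + t := by linarith
        exact le_of_mul_le_mul_right h4 hsum
      have ihK := ih hKpos
      linarith
  rcases Nat.eq_zero_or_pos K with rfl | hK
  · simp
  have h2 : 0 ≤ 2 * (Real.sqrt (K:ℝ))⁻¹ := by positivity
  linarith [main K hK]

/-- `∑_{n ≤ X} f(n)^{-1/2} ≪ X^{1/2} log X` with an absolute implied constant. -/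
theorem sum_squarefreeUnitaryPart_rpow_neg_half :
    ∃ C : ℝ, 0 < C ∧ ∀ X : ℝ, 2 ≤ X →
      ∑ n ∈ Finset.Icc 1 ⌊X⌋₊, (squarefreeUnitaryPart n : ℝ) ^ (-(1/2 : ℝ))
        ≤ C * X ^ ((1:ℝ)/2) * Real.log X := by
  classical
  refine ⟨18, by norm_num, fun X hX => ?_⟩
  have hX0 : (0:ℝ) < X := by linarith
  set N := ⌊X⌋₊ with hN
  have hNX : (N : ℝ) ≤ X := Nat.floor_le (le_of_lt hX0)
  have hN2 : 2 ≤ N := Nat.le_floor (by exact_mod_cast hX)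
  have hrpow : ∀ k : ℕ, (k : ℝ) ^ (-(1/2 : ℝ)) = (Real.sqrt k)⁻¹ := fun k => by
    rw [Real.rpow_neg (Nat.cast_nonneg k), Real.sqrt_eq_rpow]
  set M : Finset ℕ := (Icc 1 N).filter (fun m => ∀ q, q.Prime → q ∣ m → q ^ 2 ∣ m)
    with hM
  set T : Finset (ℕ × ℕ) := M.biUnion (fun m => {m} ×ˢ Icc 1 (N / m)) with hT
  have hprod : ∀ n, n / squarefreeUnitaryPart n * squarefreeUnitaryPart n = n :=
    fun n => Nat.div_mul_cancel (fUP_dvd n)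
  -- membership of the pair in T
  have hmemT : ∀ n ∈ Icc 1 N,
      (n / squarefreeUnitaryPart n, squarefreeUnitaryPart n) ∈ T := by
    intro n hn
    obtain ⟨hn1, hnN⟩ := Finset.mem_Icc.mp hn
    have hn0 : n ≠ 0 := by omega
    have hpn := hprod n
    have hm0 : n / squarefreeUnitaryPart n ≠ 0 := by
      intro h; rw [h, zero_mul] at hpn; exact hn0 hpn.symm
    have hd0 : squarefreeUnitaryPart n ≠ 0 := by
      intro h; rw [h, mul_zero] at hpn; exact hn0 hpn.symm
    rw [hT, Finset.mem_biUnion]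
    refine ⟨n / squarefreeUnitaryPart n, ?_, ?_⟩
    · rw [hM, Finset.mem_filter, Finset.mem_Icc]
      exact ⟨⟨Nat.one_le_iff_ne_zero.mpr hm0,
        le_trans (Nat.div_le_self _ _) hnN⟩,
        fun q hq hdq => quot_powerful hn0 hq hdq⟩
    · rw [Finset.mem_product, Finset.mem_Icc]
      refine ⟨Finset.mem_singleton_self _,
        Nat.one_le_iff_ne_zero.mpr hd0, ?_⟩
      rw [Nat.le_div_iff_mul_le (Nat.pos_of_ne_zero hm0)]
      calc squarefreeUnitaryPart n * (n / squarefreeUnitaryPart n) = n := by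
            rw [mul_comm]; exact hpn
        _ ≤ N := hnN
  -- Step 1: bound main sum by sum over T
  have step1 : ∑ n ∈ Icc 1 N, (squarefreeUnitaryPart n : ℝ) ^ (-(1/2 : ℝ))
      ≤ ∑ p ∈ T, (Real.sqrt p.2)⁻¹ := by
    have hinj : ∀ x ∈ Icc 1 N, ∀ y ∈ Icc 1 N,
        (fun n => (n / squarefreeUnitaryPart n, squarefreeUnitaryPart n)) x =
        (fun n => (n / squarefreeUnitaryPart n, squarefreeUnitaryPart n)) y → x = y := by
      intro x _ y _ hxy
      simp only [Prod.mk.injEq] at hxy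
      rw [← hprod x, ← hprod y, hxy.1, hxy.2]
    calc ∑ n ∈ Icc 1 N, (squarefreeUnitaryPart n : ℝ) ^ (-(1/2 : ℝ))
        = ∑ n ∈ Icc 1 N, (Real.sqrt (squarefreeUnitaryPart n))⁻¹ :=
          Finset.sum_congr rfl (fun n _ => hrpow _)
      _ = ∑ p ∈ (Icc 1 N).image
            (fun n => (n / squarefreeUnitaryPart n, squarefreeUnitaryPart n)),
            (Real.sqrt p.2)⁻¹ :=
          (Finset.sum_image (f := fun p : ℕ × ℕ => (Real.sqrt p.2)⁻¹) hinj).symm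
      _ ≤ ∑ p ∈ T, (Real.sqrt p.2)⁻¹ := by
          apply Finset.sum_le_sum_of_subset_of_nonneg
          · intro p hp
            obtain ⟨n, hn, rfl⟩ := Finset.mem_image.mp hp
            exact hmemT n hn
          · intro p _ _; positivity
  -- Step 2: sum over T splits
  have step2 : ∑ p ∈ T, (Real.sqrt p.2)⁻¹
      = ∑ m ∈ M, ∑ k ∈ Icc 1 (N / m), (Real.sqrt k)⁻¹ := by
    rw [hT, Finset.sum_biUnion]
    · exact Finset.sum_congr rfl (fun m _ => by
        rw [Finset.sum_product, Finset.sum_singleton])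
    · intro a _ b _ hab
      simp only [Finset.disjoint_left]
      intro p hpa hpb
      rw [Finset.mem_product, Finset.mem_singleton] at hpa hpb
      exact hab (hpa.1.symm.trans hpb.1)
  -- Step 3: inner sums
  have hXhalf : (0:ℝ) ≤ Real.sqrt X := Real.sqrt_nonneg X
  have step3 : ∀ m ∈ M, ∑ k ∈ Icc 1 (N / m), (Real.sqrt k)⁻¹
      ≤ 2 * Real.sqrt X * (Real.sqrt m)⁻¹ := by
    intro m hm
    obtain ⟨hmIcc, -⟩ := Finset.mem_filter.mp hm
    obtain ⟨hm1, -⟩ := Finset.mem_Icc.mp hmIcc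
    have hmR : (0:ℝ) < m := by exact_mod_cast hm1
    calc ∑ k ∈ Icc 1 (N / m), (Real.sqrt k)⁻¹
        ≤ 2 * Real.sqrt ((N / m : ℕ)) := sum_inv_sqrt_le _
      _ ≤ 2 * Real.sqrt X * (Real.sqrt m)⁻¹ := by
          have h1 : ((N / m : ℕ) : ℝ) ≤ X / m :=
            le_trans Nat.cast_div_le (by gcongr)
          calc 2 * Real.sqrt ((N / m : ℕ)) ≤ 2 * Real.sqrt (X / m) := by
                gcongr
            _ = 2 * (Real.sqrt X / Real.sqrt m) := by rw [Real.sqrt_div hX0.le]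
            _ = 2 * Real.sqrt X * (Real.sqrt m)⁻¹ := by rw [div_eq_mul_inv]; ring
  -- Step 4: sum over powerful numbers
  have step4 : ∑ m ∈ M, (Real.sqrt m)⁻¹ ≤ 3 * (1 + Real.log N) := by
    have hex : ∀ m : ℕ, ∃ p : ℕ × ℕ,
        m ∈ M → 0 < p.1 ∧ 0 < p.2 ∧ p.1 ^ 3 * p.2 ^ 2 = m := by
      intro m
      by_cases hm : m ∈ M
      · obtain ⟨hmIcc, hpow⟩ := Finset.mem_filter.mp hm
        obtain ⟨hm1, -⟩ := Finset.mem_Icc.mp hmIcc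
        obtain ⟨a, c, ha, hc, habc⟩ :=
          exists_cube_mul_sq (by omega) hpow
        exact ⟨(a, c), fun _ => ⟨ha, hc, habc⟩⟩
      · exact ⟨(1, 1), fun h => absurd h hm⟩
    choose F hF using hex
    have hFinj : ∀ x ∈ M, ∀ y ∈ M, F x = F y → x = y := by
      intro x hx y hy hxy
      obtain ⟨-, -, hx3⟩ := hF x hx
      obtain ⟨-, -, hy3⟩ := hF y hy
      rw [← hx3, ← hy3, hxy]
    have hterm : ∀ m ∈ M, (Real.sqrt m)⁻¹
        = (((F m).1 : ℝ) * Real.sqrt (F m).1)⁻¹ * (((F m).2 : ℝ))⁻¹ := by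
      intro m hm
      obtain ⟨ha, hc, habc⟩ := hF m hm
      have hcast : (m : ℝ) = ((F m).1 : ℝ) ^ 3 * ((F m).2 : ℝ) ^ 2 := by
        exact_mod_cast habc.symm
      have haR : (0:ℝ) ≤ ((F m).1 : ℝ) := Nat.cast_nonneg _
      have hcR : (0:ℝ) ≤ ((F m).2 : ℝ) := Nat.cast_nonneg _
      rw [hcast, Real.sqrt_mul (by positivity), Real.sqrt_sq hcR,
        show (((F m).1 : ℝ)) ^ 3 = (((F m).1 : ℝ)) ^ 2 * ((F m).1 : ℝ) by ring,
        Real.sqrt_mul (by positivity), Real.sqrt_sq haR, mul_inv]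
    have hsub : M.image F ⊆ Icc 1 N ×ˢ Icc 1 N := by
      intro p hp
      obtain ⟨m, hm, rfl⟩ := Finset.mem_image.mp hp
      obtain ⟨ha, hc, habc⟩ := hF m hm
      obtain ⟨hmIcc, -⟩ := Finset.mem_filter.mp hm
      obtain ⟨-, hmN⟩ := Finset.mem_Icc.mp hmIcc
      rw [Finset.mem_product, Finset.mem_Icc, Finset.mem_Icc]
      refine ⟨⟨ha, ?_⟩, hc, ?_⟩
      · calc (F m).1 ≤ (F m).1 ^ 3 := Nat.le_self_pow (by norm_num) _
          _ ≤ (F m).1 ^ 3 * (F m).2 ^ 2 := Nat.le_mul_of_pos_right _ (by positivity)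
          _ = m := habc
          _ ≤ N := hmN
      · calc (F m).2 ≤ (F m).2 ^ 2 := Nat.le_self_pow (by norm_num) _
          _ ≤ (F m).1 ^ 3 * (F m).2 ^ 2 := Nat.le_mul_of_pos_left _ (by positivity)
          _ = m := habc
          _ ≤ N := hmN
    calc ∑ m ∈ M, (Real.sqrt m)⁻¹
        = ∑ m ∈ M, (((F m).1 : ℝ) * Real.sqrt (F m).1)⁻¹ * (((F m).2 : ℝ))⁻¹ :=
          Finset.sum_congr rfl hterm
      _ = ∑ p ∈ M.image F, ((p.1 : ℝ) * Real.sqrt p.1)⁻¹ * ((p.2 : ℝ))⁻¹ :=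
          (Finset.sum_image
            (f := fun p : ℕ × ℕ => ((p.1 : ℝ) * Real.sqrt p.1)⁻¹ * ((p.2 : ℝ))⁻¹)
            hFinj).symm
      _ ≤ ∑ p ∈ Icc 1 N ×ˢ Icc 1 N, ((p.1 : ℝ) * Real.sqrt p.1)⁻¹ * ((p.2 : ℝ))⁻¹ := by
          apply Finset.sum_le_sum_of_subset_of_nonneg hsub
          intro p _ _; positivity
      _ = (∑ a ∈ Icc 1 N, ((a : ℝ) * Real.sqrt a)⁻¹) * (∑ c ∈ Icc 1 N, ((c : ℝ))⁻¹) := by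
          rw [Finset.sum_product]
          exact (Finset.sum_mul_sum (Icc 1 N) (Icc 1 N)
            (fun a : ℕ => ((a : ℝ) * Real.sqrt a)⁻¹) (fun c : ℕ => ((c : ℝ))⁻¹)).symm
      _ ≤ 3 * (1 + Real.log N) := by
          apply mul_le_mul (sum_inv_mul_sqrt_le N) (sum_inv_le_one_add_log N)
          · exact Finset.sum_nonneg (fun c _ => by positivity)
          · norm_num
  -- Final assembly
  have hlog2 : (1:ℝ)/2 ≤ Real.log X := by
    have h2 : Real.log 2 ≤ Real.log X := Real.log_le_log (by norm_num) hX
    have := Real.log_two_gt_d9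
    linarith
  have hlogN : Real.log N ≤ Real.log X := by
    apply Real.log_le_log (by exact_mod_cast Nat.lt_of_lt_of_le (by norm_num) hN2) hNX
  have hmain : ∑ n ∈ Icc 1 N, (squarefreeUnitaryPart n : ℝ) ^ (-(1/2 : ℝ))
      ≤ 2 * Real.sqrt X * (3 * (1 + Real.log N)) := by
    calc ∑ n ∈ Icc 1 N, (squarefreeUnitaryPart n : ℝ) ^ (-(1/2 : ℝ))
        ≤ ∑ p ∈ T, (Real.sqrt p.2)⁻¹ := step1
      _ = ∑ m ∈ M, ∑ k ∈ Icc 1 (N / m), (Real.sqrt k)⁻¹ := step2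
      _ ≤ ∑ m ∈ M, 2 * Real.sqrt X * (Real.sqrt m)⁻¹ := Finset.sum_le_sum step3
      _ = 2 * Real.sqrt X * ∑ m ∈ M, (Real.sqrt m)⁻¹ := by rw [Finset.mul_sum]
      _ ≤ 2 * Real.sqrt X * (3 * (1 + Real.log N)) := by
          apply mul_le_mul_of_nonneg_left step4 (by positivity)
  have hfinal : 2 * Real.sqrt X * (3 * (1 + Real.log N)) ≤ 18 * X ^ ((1:ℝ)/2) * Real.log X := by
    rw [show X ^ ((1:ℝ)/2) = Real.sqrt X from (Real.sqrt_eq_rpow X).symm]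
    have h1 : 1 + Real.log N ≤ 1 + Real.log X := by linarith
    have h2 : 1 + Real.log X ≤ 3 * Real.log X := by linarith
    nlinarith [Real.sqrt_nonneg X, hlog2]
  exact le_trans hmain hfinal
end
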